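/- If symmetry but not transitivity is required in the definition of ∀-fair bisimulation, the resulting relations are not closed under transitive closure: there exists a fair transition system and a symmetric relation R satisfying the ∀-fair bisimulation transfer properties whose transitive closure violates the fairness transfer property. -/
import Mathlib


/-- Infinite execution along the infinite trace `σ`. -/
def IsInfExec {X A : Type} (tr : X → A → X → Prop) (σ : ℕ → A) (p : ℕ → X) : Prop :=
  ∀ i, tr (p i) (σ i) (p (i + 1))

/-- The transition-transfer property of ∀-fair bisimulations. -/
def Transfer1 {X A : Type} (tr : X → A → X → Prop) (R : X → X → Prop) : Prop :=
  ∀ x x' y a, tr x a x' → R x y → ∃ y', tr y a y' ∧ R x' y'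

/-- The fairness-transfer property of ∀-fair bisimulations: pointwise-related
infinite executions with equal domains are both fair or both unfair. -/
def Transfer2 {X A : Type} (tr : X → A → X → Prop)
    (F : (ℕ → A) → (ℕ → X) → Prop) (R : X → X → Prop) : Prop :=
  ∀ (σ : ℕ → A) (p q : ℕ → X), IsInfExec tr σ p → IsInfExec tr σ q →
    (∀ i, R (p i) (q i)) → F σ p → F σ q

/-- The auxiliary relation: natural numbers at distance at most 1. -/
private def Rnear : ℕ → ℕ → Prop := fun u v => u = v ∨ u = v + 1 ∨ v = u + 1

private lemma transGen_Rnear_all (u v : ℕ) : Relation.TransGen Rnear u v := by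
  have hdown : ∀ n : ℕ, Relation.TransGen Rnear n 0 := by
    intro n
    induction n with
    | zero => exact Relation.TransGen.single (Or.inl rfl)
    | succ k ih => exact Relation.TransGen.head (Or.inr (Or.inl rfl)) ih
  have hup : ∀ n : ℕ, Relation.TransGen Rnear 0 n := by
    intro n
    induction n with
    | zero => exact Relation.TransGen.single (Or.inl rfl)
    | succ k ih => exact Relation.TransGen.tail ih (Or.inr (Or.inr rfl))
  exact (hdown u).trans (hup v)

/-- if only symmetry (not transitivity) is required of ∀-fair
bisimulations, they are not closed under transitive closure: there are a fair
transition system and a symmetric relation `R` satisfying both transfer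
properties whose transitive closure violates the fairness transfer property. -/
theorem forall_fair_bisim_not_closed_under_transitive_closure :
    ∃ (X A : Type) (tr : X → A → X → Prop)
      (F : (ℕ → A) → (ℕ → X) → Prop) (R : X → X → Prop),
      Symmetric R ∧ Transfer1 tr R ∧ Transfer2 tr F R ∧
      ¬ Transfer2 tr F (Relation.TransGen R) := by
  refine ⟨ℕ, Unit, fun u _ v => v = u ∨ v = u + 1,
    fun _ p => ∀ n, ∃ k, n ≤ p k, Rnear, ?_, ?_, ?_, ?_⟩
  · -- symmetry
    intro u v h
    unfold Rnear at *
    omega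
  · -- Transfer1
    intro x x' y a ht hR
    unfold Rnear at *
    by_cases h : y + 1 ≤ x'
    · exact ⟨y + 1, by omega, by omega⟩
    · exact ⟨y, by omega, by omega⟩
  · -- Transfer2 for Rnear
    intro σ p q _ _ hrel hF n
    obtain ⟨k, hk⟩ := hF (n + 1)
    have := hrel k
    unfold Rnear at this
    exact ⟨k, by omega⟩
  · -- failure for the transitive closure
    intro h
    have := h (fun _ => ()) (fun k => k) (fun _ => 0)
      (fun i => Or.inr rfl) (fun i => Or.inl rfl)
      (fun i => transGen_Rnear_all i 0)
      (fun n => ⟨n, le_refl n⟩)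
    obtain ⟨k, hk⟩ := this 1
    exact Nat.not_succ_le_zero 0 hk
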